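/- Let n ≥ 1 and k ≥ 1 be integers, let H = {x ∈ ℝⁿ : xₙ ≥ 0} be the closed upper half-space, and let f : ℝⁿ → ℝ be of class C^k. Assume: (i) sup_{x ∈ H} ‖iteratedFDeriv ℝ k f x‖ ≤ A; (ii) for every multi-index γ with |γ| ≤ k−1 and every x with xₙ = 0 one has |∂^γ f(x)| ≤ ε. Then for every multi-index γ with |γ| ≤ k−1 and every x ∈ H, |∂^γ f(x)| ≤ ε · Σ_{i=0}^{k−1−|γ|} xₙ^i / i! + A · xₙ^{k−|γ|} / (k−|γ|)!. -/

import Mathlib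

open Finset

section DirectionalDerivatives

variable {E : Type*} [NormedAddCommGroup E] [NormedSpace ℝ E]

/-- Directional derivative operator. -/
noncomputable def dirD (v : E) (f : E → ℝ) : E → ℝ := fun y => fderiv ℝ f y v

/-- Iterated directional derivatives along a list of directions; the head of the list is
applied innermost. -/
noncomputable def dlist : List E → (E → ℝ) → (E → ℝ)
  | [], f => f
  | v :: T, f => dlist T (dirD v f)

lemma dlist_append (M N : List E) (f : E → ℝ) : dlist (M ++ N) f = dlist N (dlist M f) := by
  induction M generalizing f with
  | nil => rfl
  | cons v T ih => show dlist (T ++ N) (dirD v f) = _; rw [ih]; rfl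

lemma dirD_contDiff {f : E → ℝ} {k : ℕ} (hf : ContDiff ℝ (k + 1 : ℕ) f) (v : E) :
    ContDiff ℝ k (dirD v f) := by
  have h1 : ContDiff ℝ k (fderiv ℝ f) := hf.fderiv_right (by norm_cast)
  exact (ContinuousLinearMap.apply ℝ ℝ v).contDiff.comp h1

lemma dirD_contDiff_of_le {f : E → ℝ} {k m : ℕ} (hf : ContDiff ℝ k f) (h : m + 1 ≤ k) (v : E) :
    ContDiff ℝ m (dirD v f) :=
  dirD_contDiff (hf.of_le (by exact_mod_cast h)) v

lemma dirD_comm {f : E → ℝ} (hf : ContDiff ℝ (2 : ℕ) f) (u v x : E) :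
    dirD u (dirD v f) x = dirD v (dirD u f) x := by
  have hsymm : IsSymmSndFDerivAt ℝ f x := hf.contDiffAt.isSymmSndFDerivAt (by simp)
  have hdf : DifferentiableAt ℝ (fderiv ℝ f) x := by
    have h1 : ContDiff ℝ (1 : ℕ) (fderiv ℝ f) := hf.fderiv_right (by norm_cast)
    exact h1.differentiable (by norm_cast) x
  have key : ∀ w : E, fderiv ℝ (dirD w f) x
      = (ContinuousLinearMap.apply ℝ ℝ w).comp (fderiv ℝ (fderiv ℝ f) x) := by
    intro w
    exact ((ContinuousLinearMap.apply ℝ ℝ w).hasFDerivAt.comp x hdf.hasFDerivAt).fderiv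
  show fderiv ℝ (dirD v f) x u = fderiv ℝ (dirD u f) x v
  rw [key, key]
  exact hsymm u v

lemma dlist_contDiff (M : List E) : ∀ (f : E → ℝ) (k j : ℕ), ContDiff ℝ k f →
    M.length + j ≤ k → ContDiff ℝ j (dlist M f) := by
  induction M with
  | nil => intro f k j hf h; exact hf.of_le (by exact_mod_cast by simpa using h)
  | cons v T ih =>
    intro f k j hf h
    simp only [List.length_cons] at h
    exact ih (dirD v f) (k - 1) j (dirD_contDiff_of_le hf (by omega) v) (by omega)

lemma dlist_swap (M : List E) : ∀ (f : E → ℝ) (k : ℕ), ContDiff ℝ k f → M.length + 1 ≤ k →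
    ∀ (e x : E), dlist (M ++ [e]) f x = dlist (e :: M) f x := by
  induction M with
  | nil => intro f k hf h e x; rfl
  | cons u T ih =>
    intro f k hf h e x
    simp only [List.length_cons] at h
    have h2 : (2 : ℕ) ≤ k := by omega
    have hk : ContDiff ℝ (k - 1 : ℕ) (dirD u f) := dirD_contDiff_of_le hf (by omega) u
    have step2 : dirD e (dirD u f) = dirD u (dirD e f) :=
      funext fun y => dirD_comm (hf.of_le (by exact_mod_cast h2)) e u y
    show dlist (T ++ [e]) (dirD u f) x = dlist T (dirD u (dirD e f)) x
    rw [ih (dirD u f) (k - 1) hk (by omega) e x]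
    show dlist T (dirD e (dirD u f)) x = _
    rw [step2]

lemma iteratedFDeriv_snoc {k m : ℕ} {f : E → ℝ} (hf : ContDiff ℝ k f) (hm : m + 1 ≤ k)
    (x : E) (v : Fin m → E) (u : E) :
    iteratedFDeriv ℝ (m + 1) f x (Fin.snoc v u) = iteratedFDeriv ℝ m (dirD u f) x v := by
  rw [iteratedFDeriv_succ_apply_right]
  have h1 : ContDiff ℝ (m : ℕ) (fderiv ℝ f) := hf.fderiv_right (by exact_mod_cast hm)
  have h2 := (ContinuousLinearMap.apply ℝ ℝ u).iteratedFDeriv_comp_left (h1.contDiffAt (x := x)) le_rfl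
  have h3 := congrFun (congrArg (fun (P : ContinuousMultilinearMap ℝ (fun _ : Fin m => E) ℝ)
    => (P : (Fin m → E) → ℝ)) h2) v
  simp only [ContinuousLinearMap.compContinuousMultilinearMap_coe, Function.comp_apply,
    ContinuousLinearMap.apply_apply] at h3
  simp only [Fin.init_snoc, Fin.snoc_last]
  rw [← h3]
  rfl

lemma iteratedFDeriv_eq_dlist : ∀ (m : ℕ) (f : E → ℝ) (k : ℕ), ContDiff ℝ k f → m ≤ k →
    ∀ (v : Fin m → E) (x : E), iteratedFDeriv ℝ m f x v = dlist (List.ofFn v).reverse f x := by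
  intro m
  induction m with
  | zero =>
    intro f k hf _ v x
    simp [dlist, iteratedFDeriv_zero_apply]
  | succ m ih =>
    intro f k hf hm v x
    have h1 : iteratedFDeriv ℝ (m + 1) f x v
        = iteratedFDeriv ℝ m (dirD (v (Fin.last m)) f) x (Fin.init v) := by
      have := iteratedFDeriv_snoc hf hm x (Fin.init v) (v (Fin.last m))
      rw [Fin.snoc_init_self] at this; exact this
    rw [h1, ih (dirD (v (Fin.last m)) f) (k - 1) (dirD_contDiff_of_le hf (by omega) _)
      (by omega) (Fin.init v) x]
    rw [List.ofFn_succ' v, List.concat_eq_append, List.reverse_append]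
    rfl

end DirectionalDerivatives

section PolyStep

lemma taylor_G_hasDeriv (d : ℕ) (ε A : ℝ) (t : ℝ) :
    HasDerivAt (fun t : ℝ => ε * (1 + ∑ i ∈ range d, t ^ (i + 1) / ((i + 1).factorial : ℝ))
        + A * t ^ (d + 1) / ((d + 1).factorial : ℝ))
      (ε * ∑ i ∈ range d, t ^ i / (i.factorial : ℝ) + A * t ^ d / (d.factorial : ℝ)) t := by
  have hterm : ∀ i : ℕ, HasDerivAt (fun t : ℝ => t ^ (i + 1) / ((i + 1).factorial : ℝ))
      (t ^ i / (i.factorial : ℝ)) t := by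
    intro i
    have h := (hasDerivAt_pow (i + 1) t).div_const ((i + 1).factorial : ℝ)
    refine h.congr_deriv ?_
    simp only [Nat.add_sub_cancel, Nat.cast_add, Nat.cast_one]
    have : ((i + 1).factorial : ℝ) = (i + 1) * (i.factorial : ℝ) := by
      rw [Nat.factorial_succ]; push_cast; ring
    rw [this]
    have h1 : (i.factorial : ℝ) ≠ 0 := Nat.cast_ne_zero.mpr (Nat.factorial_ne_zero i)
    field_simp
  have hsum : HasDerivAt (fun t : ℝ => 1 + ∑ i ∈ range d, t ^ (i + 1) / ((i + 1).factorial : ℝ))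
      (∑ i ∈ range d, t ^ i / (i.factorial : ℝ)) t := by
    have := HasDerivAt.sum (fun i (_ : i ∈ range d) => hterm i)
    simpa using (this.const_add (1 : ℝ))
  have hlast := (hterm d).const_mul A
  have := (hsum.const_mul ε).add hlast
  refine (this.congr_deriv (by ring)).congr_of_eventuallyEq
    (Filter.Eventually.of_forall fun y => ?_)
  simp only [Pi.add_apply]; ring

lemma poly_step {φ ψ : ℝ → ℝ} (hd : ∀ t, HasDerivAt φ (ψ t) t) (d : ℕ) (ε A s : ℝ)
    (hs : 0 ≤ s) (h0 : |φ 0| ≤ ε)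
    (hb : ∀ t ∈ Set.Icc (0 : ℝ) s,
      |ψ t| ≤ ε * ∑ i ∈ range d, t ^ i / (i.factorial : ℝ) + A * t ^ d / (d.factorial : ℝ)) :
    |φ s| ≤ ε * ∑ i ∈ range (d + 1), s ^ i / (i.factorial : ℝ)
      + A * s ^ (d + 1) / ((d + 1).factorial : ℝ) := by
  set G : ℝ → ℝ := fun t => ε * (1 + ∑ i ∈ range d, t ^ (i + 1) / ((i + 1).factorial : ℝ))
      + A * t ^ (d + 1) / ((d + 1).factorial : ℝ) with hG
  set B : ℝ → ℝ := fun t => ε * ∑ i ∈ range d, t ^ i / (i.factorial : ℝ)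
      + A * t ^ d / (d.factorial : ℝ) with hB
  have hGd : ∀ t, HasDerivAt G (B t) t := fun t => taylor_G_hasDeriv d ε A t
  have hG0 : G 0 = ε := by simp [hG]
  have hGs : G s = ε * ∑ i ∈ range (d + 1), s ^ i / (i.factorial : ℝ)
      + A * s ^ (d + 1) / ((d + 1).factorial : ℝ) := by
    rw [hG]
    rw [Finset.sum_range_succ']
    simp [add_comm]
  have mono : ∀ (f : ℝ → ℝ) (f' : ℝ → ℝ), (∀ t, HasDerivAt f (f' t) t) →
      (∀ t ∈ Set.Icc (0:ℝ) s, 0 ≤ f' t) → f 0 ≤ f s := by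
    intro f f' hf hpos
    have hmono : MonotoneOn f (Set.Icc (0:ℝ) s) := by
      apply monotoneOn_of_deriv_nonneg (convex_Icc _ _)
      · exact fun t _ => ((hf t).differentiableAt).continuousAt.continuousWithinAt
      · intro t ht
        exact ((hf t).differentiableAt).differentiableWithinAt
      · intro t ht
        rw [(hf t).deriv]
        exact hpos t (Set.mem_of_mem_of_subset ht
          (by rw [interior_Icc]; exact Set.Ioo_subset_Icc_self))
    exact hmono (Set.left_mem_Icc.mpr hs) (Set.right_mem_Icc.mpr hs) hs
  have h1 : G 0 - φ 0 ≤ G s - φ s := by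
    have h := mono (fun t => G t - φ t) (fun t => B t - ψ t)
      (fun t => (hGd t).sub (hd t))
      (fun t ht => by
        have h2 := (abs_le.mp (hb t ht)).2
        show 0 ≤ B t - ψ t
        simp only [hB]
        linarith)
    simpa using h
  have h2 : G 0 + φ 0 ≤ G s + φ s := by
    have h := mono (fun t => G t + φ t) (fun t => B t + ψ t)
      (fun t => (hGd t).add (hd t))
      (fun t ht => by
        have h2 := (abs_le.mp (hb t ht)).1
        show 0 ≤ B t + ψ t
        simp only [hB]
        linarith)
    simpa using h
  rw [← hGs]
  have hφ0 := abs_le.mp h0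
  rw [hG0] at h1 h2
  rw [abs_le]
  constructor <;> linarith

end PolyStep

/-- The multi-index partial derivative `∂^γ f (x)` of `f : ℝⁿ → ℝ`, defined by applying the
iterated Fréchet derivative of order `|γ| = ∑ i, γ i` to the list of coordinate directions in
which each direction `i` is repeated `γ i` times. -/
noncomputable def mpderiv {n : ℕ} (γ : Fin n → ℕ) (f : (Fin n → ℝ) → ℝ)
    (x : Fin n → ℝ) : ℝ :=
  iteratedFDeriv ℝ ((List.finRange n).flatMap (fun i => List.replicate (γ i) i)).length f x
    (fun j => Pi.single (((List.finRange n).flatMap (fun i => List.replicate (γ i) i)).get j) 1)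

section Mpderiv

/-- The canonical list of directions of a multi-index. -/
def mlist {n : ℕ} (γ : Fin n → ℕ) : List (Fin n) :=
  (List.finRange n).flatMap (fun i => List.replicate (γ i) i)

lemma mlist_length {n : ℕ} (γ : Fin n → ℕ) : (mlist γ).length = ∑ i, γ i := by
  rw [mlist, List.length_flatMap]
  rw [show (List.finRange n) = List.ofFn id from by simp [List.finRange]; rfl]
  rw [List.map_ofFn, List.sum_ofFn]
  simp

lemma mlist_update {n : ℕ} (γ : Fin (n + 1) → ℕ) :
    mlist (Function.update γ (Fin.last n) (γ (Fin.last n) + 1))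
      = mlist γ ++ [Fin.last n] := by
  unfold mlist
  rw [List.finRange_succ_last, List.flatMap_append, List.flatMap_append]
  rw [List.flatMap_singleton, List.flatMap_singleton]
  rw [Function.update_self, List.replicate_succ']
  have h : ∀ a : Fin n, (List.replicate
        (Function.update γ (Fin.last n) (γ (Fin.last n) + 1) a.castSucc) a.castSucc
        : List (Fin (n+1)))
      = List.replicate (γ a.castSucc) a.castSucc := by
    intro a
    rw [Function.update_of_ne (Fin.castSucc_lt_last a).ne]
  rw [List.flatMap_map, List.flatMap_map]
  simp only [Function.comp_def, h]
  rw [List.append_assoc]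

/-- The vector list of a multi-index. -/
noncomputable def mvlist {n : ℕ} (γ : Fin n → ℕ) : List (Fin n → ℝ) :=
  (mlist γ).map (fun i => Pi.single i (1 : ℝ))

lemma mpderiv_eq_dlist {n k : ℕ} (γ : Fin n → ℕ) (f : (Fin n → ℝ) → ℝ)
    (hf : ContDiff ℝ k f) (h : ∑ i, γ i ≤ k) (x : Fin n → ℝ) :
    mpderiv γ f x = dlist (mvlist γ).reverse f x := by
  have hlen : (mlist γ).length ≤ k := by rw [mlist_length]; exact h
  have := iteratedFDeriv_eq_dlist (mlist γ).length f k hf hlen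
    (fun j => Pi.single ((mlist γ).get j) (1 : ℝ)) x
  rw [show mpderiv γ f x = iteratedFDeriv ℝ (mlist γ).length f x
      (fun j => Pi.single ((mlist γ).get j) (1 : ℝ)) from rfl, this]
  congr 1
  rw [mvlist]
  congr 1
  rw [show (fun j => Pi.single ((mlist γ).get j) (1 : ℝ))
      = (fun i => Pi.single i (1 : ℝ)) ∘ (mlist γ).get from rfl]
  rw [← List.map_ofFn, List.ofFn_get]

end Mpderiv

lemma sum_update_succ {n : ℕ} (γ : Fin (n + 1) → ℕ) :
    ∑ i, Function.update γ (Fin.last n) (γ (Fin.last n) + 1) i = (∑ i, γ i) + 1 := by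
  rw [Finset.sum_update_of_mem (Finset.mem_univ _)]
  have h2 := Finset.add_sum_erase Finset.univ γ (Finset.mem_univ (Fin.last n))
  rw [show (Finset.univ : Finset (Fin (n+1))) \ {Fin.last n} = Finset.univ.erase (Fin.last n)
    from by rw [Finset.sdiff_singleton_eq_erase]]
  omega

/-- The last coordinate direction. -/
def eVec (n : ℕ) : Fin (n + 1) → ℝ := Pi.single (Fin.last n) 1

lemma mpderiv_update_eq {n k : ℕ} (γ : Fin (n + 1) → ℕ) (f : (Fin (n + 1) → ℝ) → ℝ)
    (hf : ContDiff ℝ k f) (hm : (∑ i, γ i) + 1 ≤ k) (z : Fin (n + 1) → ℝ) :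
    mpderiv (Function.update γ (Fin.last n) (γ (Fin.last n) + 1)) f z
      = dirD (eVec n) (dlist (mvlist γ).reverse f) z := by
  have hsum := sum_update_succ γ
  rw [mpderiv_eq_dlist _ f hf (by omega) z]
  have hml : mvlist (Function.update γ (Fin.last n) (γ (Fin.last n) + 1))
      = mvlist γ ++ [eVec n] := by
    rw [mvlist, mlist_update, List.map_append, ← mvlist]
    rfl
  rw [hml, List.reverse_append, List.reverse_singleton, List.singleton_append]
  rw [← dlist_swap (mvlist γ).reverse f k hf
    (by simp [mvlist, mlist_length]; omega) (eVec n) z]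
  rw [dlist_append]
  rfl

lemma main_step {n k : ℕ} (γ : Fin (n + 1) → ℕ) (f : (Fin (n + 1) → ℝ) → ℝ)
    (hf : ContDiff ℝ k f) (hm : (∑ i, γ i) + 1 ≤ k) (x : Fin (n + 1) → ℝ)
    (hx : 0 ≤ x (Fin.last n)) (ε A : ℝ) (d : ℕ)
    (h0 : |mpderiv γ f (Function.update x (Fin.last n) 0)| ≤ ε)
    (hb : ∀ t ∈ Set.Icc (0 : ℝ) (x (Fin.last n)),
      |mpderiv (Function.update γ (Fin.last n) (γ (Fin.last n) + 1)) f
        (Function.update x (Fin.last n) 0 + t • eVec n)|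
        ≤ ε * ∑ i ∈ range d, t ^ i / (i.factorial : ℝ) + A * t ^ d / (d.factorial : ℝ)) :
    |mpderiv γ f x| ≤ ε * ∑ i ∈ range (d + 1), (x (Fin.last n)) ^ i / (i.factorial : ℝ)
      + A * (x (Fin.last n)) ^ (d + 1) / ((d + 1).factorial : ℝ) := by
  have hg1 : ContDiff ℝ (1 : ℕ) (dlist (mvlist γ).reverse f) :=
    dlist_contDiff _ f k 1 hf (by simp [mvlist, mlist_length]; omega)
  have hφd : ∀ t : ℝ, HasDerivAt
      (fun u : ℝ => dlist (mvlist γ).reverse f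
        (Function.update x (Fin.last n) 0 + u • eVec n))
      (mpderiv (Function.update γ (Fin.last n) (γ (Fin.last n) + 1)) f
        (Function.update x (Fin.last n) 0 + t • eVec n)) t := by
    intro t
    have hline : HasDerivAt
        (fun u : ℝ => Function.update x (Fin.last n) 0 + u • eVec n)
        (eVec n) t := by
      simpa using ((hasDerivAt_id t).smul_const (eVec n)).const_add
        (Function.update x (Fin.last n) 0)
    have hgd := (hg1.differentiable (by norm_cast)
      (Function.update x (Fin.last n) 0 + t • eVec n)).hasFDerivAt
    have hcomp := hgd.comp_hasDerivAt t hline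
    rw [mpderiv_update_eq γ f hf hm]
    exact hcomp
  have hx' : Function.update x (Fin.last n) 0 + (x (Fin.last n)) • eVec n = x := by
    funext i
    by_cases hi : i = Fin.last n
    · subst hi; simp [eVec]
    · simp [eVec, Function.update_of_ne hi, Pi.single_eq_of_ne hi]
  have h0' : |(fun u : ℝ => dlist (mvlist γ).reverse f
        (Function.update x (Fin.last n) 0 + u • eVec n)) 0| ≤ ε := by
    simp only [zero_smul, add_zero]
    rw [← mpderiv_eq_dlist γ f hf (by omega)]
    exact h0
  have := poly_step hφd d ε A (x (Fin.last n)) hx h0' hb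
  simp only [hx'] at this
  rw [← mpderiv_eq_dlist γ f hf (by omega)] at this
  exact this

lemma mpderiv_abs_le {n : ℕ} (γ : Fin n → ℕ) (f : (Fin n → ℝ) → ℝ) (z : Fin n → ℝ) :
    |mpderiv γ f z| ≤ ‖iteratedFDeriv ℝ (mlist γ).length f z‖ := by
  rw [← Real.norm_eq_abs]
  have h1 : mpderiv γ f z = iteratedFDeriv ℝ (mlist γ).length f z
      (fun j => Pi.single ((mlist γ).get j) (1 : ℝ)) := rfl
  rw [h1]
  calc ‖iteratedFDeriv ℝ (mlist γ).length f z (fun j => Pi.single ((mlist γ).get j) (1 : ℝ))‖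
      ≤ ‖iteratedFDeriv ℝ (mlist γ).length f z‖
        * ∏ j, ‖(Pi.single ((mlist γ).get j) (1 : ℝ) : Fin n → ℝ)‖ :=
        ContinuousMultilinearMap.le_opNorm _ _
    _ = ‖iteratedFDeriv ℝ (mlist γ).length f z‖ := by simp [Pi.norm_single]

/-- **Taylor-expansion estimate on a half-space** (dimension `n + 1 ≥ 1`, with `xₙ` the last
coordinate): if `f` is `C^k`, the `k`-th derivative of `f` is bounded by `A` on the closed upper
half-space `H = {xₙ ≥ 0}`, and all partial derivatives of order `≤ k - 1` of `f` are bounded by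
`ε` on the boundary `{xₙ = 0}`, then for every multi-index `γ` with `|γ| ≤ k - 1` and every
`x ∈ H`,
`|∂^γ f (x)| ≤ ε * ∑_{i=0}^{k-1-|γ|} xₙ^i / i! + A * xₙ^{k-|γ|} / (k-|γ|)!`. -/
theorem taylor_halfspace_estimate (n k : ℕ) (hk : 1 ≤ k) (A ε : ℝ)
    (f : (Fin (n + 1) → ℝ) → ℝ) (hf : ContDiff ℝ k f)
    (hA : ∀ x : Fin (n + 1) → ℝ, 0 ≤ x (Fin.last n) → ‖iteratedFDeriv ℝ k f x‖ ≤ A)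
    (hε : ∀ γ : Fin (n + 1) → ℕ, (∑ i, γ i) ≤ k - 1 →
      ∀ x : Fin (n + 1) → ℝ, x (Fin.last n) = 0 → |mpderiv γ f x| ≤ ε) :
    ∀ γ : Fin (n + 1) → ℕ, (∑ i, γ i) ≤ k - 1 →
      ∀ x : Fin (n + 1) → ℝ, 0 ≤ x (Fin.last n) →
        |mpderiv γ f x|
          ≤ ε * (∑ i ∈ Finset.range (k - (∑ j, γ j)), (x (Fin.last n)) ^ i / (i.factorial : ℝ))
            + A * (x (Fin.last n)) ^ (k - ∑ j, γ j) / ((k - ∑ j, γ j).factorial : ℝ) := by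
  suffices H : ∀ e : ℕ, ∀ γ : Fin (n + 1) → ℕ, (∑ i, γ i) ≤ k - 1 → k - (∑ i, γ i) = e + 1 →
      ∀ x : Fin (n + 1) → ℝ, 0 ≤ x (Fin.last n) →
        |mpderiv γ f x|
          ≤ ε * (∑ i ∈ Finset.range (e + 1), (x (Fin.last n)) ^ i / (i.factorial : ℝ))
            + A * (x (Fin.last n)) ^ (e + 1) / ((e + 1).factorial : ℝ) by
    intro γ hγ x hx
    obtain ⟨e, he⟩ : ∃ e, k - (∑ i, γ i) = e + 1 := ⟨k - (∑ i, γ i) - 1, by omega⟩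
    rw [show (k - ∑ j, γ j) = e + 1 from he]
    exact H e γ hγ he x hx
  intro e
  induction e with
  | zero =>
    intro γ hγ he x hx
    have hm : (∑ i, γ i) + 1 ≤ k := by omega
    apply main_step γ f hf hm x hx ε A 0
    · exact hε γ hγ _ (Function.update_self _ _ _)
    · intro t ht
      set γ' := Function.update γ (Fin.last n) (γ (Fin.last n) + 1) with hγ'
      set z := Function.update x (Fin.last n) 0 + t • eVec n with hz
      have hzlast : z (Fin.last n) = t := by
        simp [hz, eVec, Function.update_self, Pi.single_eq_same]
      have hlen : (mlist γ').length = k := by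
        rw [mlist_length, hγ', sum_update_succ]; omega
      have hnorm : |mpderiv γ' f z| ≤ ‖iteratedFDeriv ℝ (mlist γ').length f z‖ :=
        mpderiv_abs_le γ' f z
      have hA' : ‖iteratedFDeriv ℝ (mlist γ').length f z‖ ≤ A := by
        rw [hlen]
        exact hA z (by rw [hzlast]; exact ht.1)
      calc |mpderiv γ' f z| ≤ A := hnorm.trans hA'
        _ ≤ ε * ∑ i ∈ range 0, t ^ i / (i.factorial : ℝ) + A * t ^ 0 / (Nat.factorial 0 : ℝ) := by
            simp
  | succ e ih =>
    intro γ hγ he x hx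
    have hm : (∑ i, γ i) + 1 ≤ k := by omega
    apply main_step γ f hf hm x hx ε A (e + 1)
    · exact hε γ hγ _ (Function.update_self _ _ _)
    · intro t ht
      set γ' := Function.update γ (Fin.last n) (γ (Fin.last n) + 1) with hγ'
      set z := Function.update x (Fin.last n) 0 + t • eVec n with hz
      have hzlast : z (Fin.last n) = t := by
        simp [hz, eVec, Function.update_self, Pi.single_eq_same]
      have hsum' : ∑ i, γ' i = (∑ i, γ i) + 1 := sum_update_succ γ
      have := ih γ' (by omega) (by omega) z (by rw [hzlast]; exact ht.1)
      rw [hzlast] at this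
      exact this
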